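/- In the greedy oracle with a single price per network p*(a) = argmax_{p∈Q} w̄(a,p)·p, the waterfall revenue of the greedy action is at least max_a max_{p∈Q} w̄(a,p)·p, i.e., at least the best single-network revenue. -/

import Mathlib

noncomputable def waterfallRevenue {K : ℕ} (p u : Fin K → ℝ) : ℝ :=
  ∑ i : Fin K, (∏ j ∈ Finset.univ.filter (fun j => j < i), (1 - u j)) * u i * p i

lemma tel_aux (u : ℕ → ℝ) (n : ℕ) :
    ∑ j ∈ Finset.range n, (∏ k ∈ Finset.range j, (1 - u k)) * u j
      = 1 - ∏ j ∈ Finset.range n, (1 - u j) := by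
  induction n with
  | zero => simp
  | succ n ih => rw [Finset.sum_range_succ, Finset.prod_range_succ, ih]; ring

lemma filter_prod_eq {K : ℕ} (i : Fin K) (v : Fin K → ℝ) (v' : ℕ → ℝ)
    (hv : ∀ j : Fin K, v' j.val = v j) :
    ∏ j ∈ Finset.univ.filter (fun j => j < i), v j
      = ∏ k ∈ Finset.range i.val, v' k := by
  apply Finset.prod_bij (fun (j : Fin K) _ => j.val)
  · intro j hj
    simp only [Finset.mem_filter, Finset.mem_univ, true_and] at hj
    exact Finset.mem_range.mpr hj
  · intro j₁ h₁ j₂ h₂ h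
    exact Fin.ext h
  · intro k hk
    have hkK : k < K := lt_trans (Finset.mem_range.mp hk) i.isLt
    refine ⟨⟨k, hkK⟩, ?_, rfl⟩
    exact Finset.mem_filter.mpr ⟨Finset.mem_univ _, Finset.mem_range.mp hk⟩
  · intro j hj
    exact (hv j).symm


/-- The greedy oracle's waterfall revenue is at least the best single-network
revenue `max_a max_{p∈Q} w̄(a,p)·p`. -/
theorem greedy_ge_best_single_network {K : ℕ} (hK : 0 < K)
    (Q : Finset ℝ) (hQ : Q.Nonempty) (hQ01 : ∀ q ∈ Q, q ∈ Set.Icc (0 : ℝ) 1)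
    (wbar : Fin K → ℝ → ℝ)
    (hwbar : ∀ a q, q ∈ Q → wbar a q ∈ Set.Icc (0 : ℝ) 1)
    (pstar : Fin K → ℝ)
    (hpstarQ : ∀ a, pstar a ∈ Q)
    (hpstar : ∀ a, ∀ q ∈ Q, wbar a q * q ≤ wbar a (pstar a) * pstar a)
    (π : Equiv.Perm (Fin K))
    (hdesc : ∀ i j : Fin K, i ≤ j → pstar (π j) ≤ pstar (π i)) :
    ∀ a : Fin K, ∀ q ∈ Q,
      wbar a q * q ≤
        waterfallRevenue (fun i => pstar (π i)) (fun i => wbar (π i) (pstar (π i))) := by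
  intro a q hq
  -- extended sequences on ℕ
  set u' : ℕ → ℝ := fun n => if h : n < K then wbar (π ⟨n, h⟩) (pstar (π ⟨n, h⟩)) else 0 with hu'
  set p' : ℕ → ℝ := fun n => if h : n < K then pstar (π ⟨n, h⟩) else 0 with hp'
  have hu'val : ∀ j : Fin K, u' j.val = wbar (π j) (pstar (π j)) := by
    intro j; simp [hu', j.isLt]
  have hp'val : ∀ j : Fin K, p' j.val = pstar (π j) := by
    intro j; simp [hp', j.isLt]
  have hu0 : ∀ n, 0 ≤ u' n := by
    intro n
    by_cases h : n < K
    · simpa [hu', h] using (hwbar (π ⟨n, h⟩) _ (hpstarQ _)).1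
    · simp [hu', h]
  have hu1 : ∀ n, u' n ≤ 1 := by
    intro n
    by_cases h : n < K
    · simpa [hu', h] using (hwbar (π ⟨n, h⟩) _ (hpstarQ _)).2
    · simp [hu', h]
  have hp0 : ∀ n, 0 ≤ p' n := by
    intro n
    by_cases h : n < K
    · simpa [hp', h] using (hQ01 _ (hpstarQ (π ⟨n, h⟩))).1
    · simp [hp', h]
  have hprod0 : ∀ s : Finset ℕ, 0 ≤ ∏ k ∈ s, (1 - u' k) :=
    fun s => Finset.prod_nonneg (fun k _ => by linarith [hu1 k])
  have hprod1 : ∀ s : Finset ℕ, ∏ k ∈ s, (1 - u' k) ≤ 1 :=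
    fun s => Finset.prod_le_one (fun k _ => by linarith [hu1 k]) (fun k _ => by linarith [hu0 k])
  have hterm0 : ∀ n, 0 ≤ (∏ k ∈ Finset.range n, (1 - u' k)) * u' n * p' n := by
    intro n
    exact mul_nonneg (mul_nonneg (hprod0 _) (hu0 n)) (hp0 n)
  -- rewrite waterfallRevenue as a range sum
  have hrev : waterfallRevenue (fun i => pstar (π i)) (fun i => wbar (π i) (pstar (π i)))
      = ∑ n ∈ Finset.range K, (∏ k ∈ Finset.range n, (1 - u' k)) * u' n * p' n := by
    rw [waterfallRevenue, ← Fin.sum_univ_eq_sum_range]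
    refine Finset.sum_congr rfl (fun j _ => ?_)
    rw [hu'val j, hp'val j,
      filter_prod_eq j (fun j => 1 - wbar (π j) (pstar (π j))) (fun k => 1 - u' k)
        (fun j => by beta_reduce; rw [hu'val j])]
  set i : Fin K := π.symm a with hi
  have hπi : π i = a := π.apply_symm_apply a
  -- prices are descending on the range
  have hdesc' : ∀ m n, m ≤ n → n < K → p' n ≤ p' m := by
    intro m n hmn hnK
    have hmK : m < K := lt_of_le_of_lt hmn hnK
    simpa [hp', hmK, hnK] using hdesc ⟨m, hmK⟩ ⟨n, hnK⟩ hmn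
  -- step 1: full sum ≥ prefix sum up to i
  have hsub : Finset.range (i.val + 1) ⊆ Finset.range K := by
    apply Finset.range_subset_range.mpr; exact i.isLt
  have step1 : ∑ n ∈ Finset.range (i.val + 1), (∏ k ∈ Finset.range n, (1 - u' k)) * u' n * p' n
      ≤ ∑ n ∈ Finset.range K, (∏ k ∈ Finset.range n, (1 - u' k)) * u' n * p' n :=
    Finset.sum_le_sum_of_subset_of_nonneg hsub (fun n _ _ => hterm0 n)
  -- step 2: each prefix term is ≥ with price replaced by p' i
  have step2 : ∑ n ∈ Finset.range (i.val + 1), (∏ k ∈ Finset.range n, (1 - u' k)) * u' n * p' i.val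
      ≤ ∑ n ∈ Finset.range (i.val + 1), (∏ k ∈ Finset.range n, (1 - u' k)) * u' n * p' n := by
    refine Finset.sum_le_sum (fun n hn => ?_)
    have hn' : n ≤ i.val := Nat.lt_succ_iff.mp (Finset.mem_range.mp hn)
    exact mul_le_mul_of_nonneg_left (hdesc' n i.val hn' i.isLt)
      (mul_nonneg (hprod0 _) (hu0 n))
  -- step 3: telescoping and lower bound by u' i * p' i
  have step3 : u' i.val * p' i.val
      ≤ ∑ n ∈ Finset.range (i.val + 1), (∏ k ∈ Finset.range n, (1 - u' k)) * u' n * p' i.val := by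
    rw [← Finset.sum_mul, tel_aux]
    apply mul_le_mul_of_nonneg_right _ (hp0 i.val)
    rw [Finset.prod_range_succ]
    nlinarith [hprod0 (Finset.range i.val), hprod1 (Finset.range i.val), hu0 i.val, hu1 i.val]
  have hfinal : wbar a q * q ≤ u' i.val * p' i.val := by
    rw [hu'val i, hp'val i, hπi]
    exact hpstar a q hq
  rw [hrev]
  linarith
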